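/- arXiv:2404.13186 — 4 statements merged into one kernel-verified Lean document; each statement's English description precedes it below -/
import Mathlib

section
/- Let H be a 2-dimensional complex Hilbert space. Then there exists a subset C of H such that for any two nonzero orthogonal vectors v, w in H, exactly one of v and w lies in C. -/
open scoped InnerProductSpace

theorem stmt_0 (H : Type*) [NormedAddCommGroup H] [InnerProductSpace ℂ H]
    (hdim : Module.finrank ℂ H = 2) :
    ∃ C : Set H, ∀ v w : H, v ≠ 0 → w ≠ 0 → ⟪v, w⟫_ℂ = 0 →
      Xor' (v ∈ C) (w ∈ C) := by
  have : FiniteDimensional ℂ H := FiniteDimensional.of_finrank_eq_succ hdim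
  -- a well-order on submodules, used as a tie-breaker
  let r : Submodule ℂ H → Submodule ℂ H → Prop := WellOrderingRel
  have hr : IsWellOrder (Submodule ℂ H) r := WellOrderingRel.isWellOrder
  -- key: for nonzero orthogonal v w, span w = (span v)ᗮ
  have key : ∀ v w : H, v ≠ 0 → w ≠ 0 → ⟪v, w⟫_ℂ = 0 →
      Submodule.span ℂ {w} = (Submodule.span ℂ {v})ᗮ := by
    intro v w hv hw hvw
    apply Submodule.eq_of_le_of_finrank_eq
    · rw [Submodule.span_singleton_le_iff_mem, Submodule.mem_orthogonal]
      intro u hu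
      rcases Submodule.mem_span_singleton.mp hu with ⟨c, rfl⟩
      simp [inner_smul_left, hvw]
    · have h1 : Module.finrank ℂ (Submodule.span ℂ {w}) = 1 :=
        finrank_span_singleton hw
      have h2 : Module.finrank ℂ (Submodule.span ℂ {v}) = 1 :=
        finrank_span_singleton hv
      have h3 := Submodule.finrank_add_finrank_orthogonal (K := Submodule.span ℂ {v})
      omega
  refine ⟨{v | r (Submodule.span ℂ {v}) ((Submodule.span ℂ {v})ᗮ)}, ?_⟩
  intro v w hv hw hvw
  have hwv : ⟪w, v⟫_ℂ = 0 := by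
    rw [← inner_conj_symm, hvw]; simp
  have h1 : Submodule.span ℂ {w} = (Submodule.span ℂ {v})ᗮ := key v w hv hw hvw
  have h2 : Submodule.span ℂ {v} = (Submodule.span ℂ {w})ᗮ := key w v hw hv hwv
  set A := Submodule.span ℂ {v}
  set B := Submodule.span ℂ {w}
  have hAB : A ≠ B := by
    intro h
    have hvB : v ∈ B := h ▸ Submodule.mem_span_singleton_self v
    have : ⟪v, v⟫_ℂ = 0 := by
      rw [h1] at hvB
      exact (Submodule.mem_orthogonal _ _).mp hvB v (Submodule.mem_span_singleton_self v)
    exact hv (inner_self_eq_zero.mp this)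
  simp only [Set.mem_setOf_eq, ← h1, ← h2]
  change Xor' (r A Aᗮ) (r B Bᗮ)
  rw [← h1, ← h2]
  rcases trichotomous_of r A B with h | h | h
  · exact Or.inl ⟨h, fun h' => asymm h h'⟩
  · exact absurd h hAB
  · exact Or.inr ⟨h, fun h' => asymm h h'⟩
end

section
/- Let p_1, …, p_ℓ be orthogonal projections on a finite-dimensional complex Hilbert space H. Then id_H − (p_1 + ⋯ + p_ℓ) is positive semidefinite if and only if p_i ∘ p_j = 0 for all i ≠ j. -/
open scoped InnerProductSpace

theorem stmt_7 (H : Type*) [NormedAddCommGroup H] [InnerProductSpace ℂ H]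
    [FiniteDimensional ℂ H] (ℓ : ℕ) (p : Fin ℓ → (H →ₗ[ℂ] H))
    (hp : ∀ i, p i ∘ₗ p i = p i) (hps : ∀ i, (p i).IsSymmetric) :
    (∀ h : H, 0 ≤ (⟪((LinearMap.id : H →ₗ[ℂ] H) - ∑ i, p i) h, h⟫_ℂ).re) ↔
      (∀ i j, i ≠ j → p i ∘ₗ p j = 0) := by
  have key : ∀ k (y : H), (⟪p k y, y⟫_ℂ).re = ‖p k y‖ ^ 2 := by
    intro k y
    have h1 : ⟪p k y, y⟫_ℂ = ⟪p k y, p k y⟫_ℂ := by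
      conv_lhs => rw [show p k y = p k (p k y) from (LinearMap.congr_fun (hp k) y).symm]
      exact hps k (p k y) y
    rw [h1]
    exact inner_self_eq_norm_sq (𝕜 := ℂ) (p k y)
  constructor
  · intro hpos i j hij
    ext x
    simp only [LinearMap.comp_apply, LinearMap.zero_apply]
    set h := p j x with hh
    have hjh : p j h = h := by
      rw [hh, ← LinearMap.comp_apply, hp j]
    have H1 := hpos h
    have hexp : (⟪((LinearMap.id : H →ₗ[ℂ] H) - ∑ i, p i) h, h⟫_ℂ).re
        = ‖h‖ ^ 2 - ∑ k, ‖p k h‖ ^ 2 := by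
      rw [LinearMap.sub_apply, LinearMap.sum_apply, inner_sub_left, sum_inner]
      simp only [Complex.sub_re, Complex.re_sum]
      rw [LinearMap.id_apply]
      rw [show (⟪h, h⟫_ℂ).re = ‖h‖ ^ 2 from inner_self_eq_norm_sq (𝕜 := ℂ) h]
      congr 1
      exact Finset.sum_congr rfl fun k _ => key k h
    have hsum : ‖p i h‖ ^ 2 + ‖p j h‖ ^ 2 ≤ ∑ k, ‖p k h‖ ^ 2 := by
      calc ‖p i h‖ ^ 2 + ‖p j h‖ ^ 2 = ∑ k ∈ {i, j}, ‖p k h‖ ^ 2 :=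
            (Finset.sum_pair (f := fun k => ‖p k h‖ ^ 2) hij).symm
        _ ≤ ∑ k, ‖p k h‖ ^ 2 :=
            Finset.sum_le_sum_of_subset_of_nonneg (Finset.subset_univ _)
              (fun k _ _ => sq_nonneg _)
    rw [hjh] at hsum
    rw [hexp] at H1
    have h2 : ‖p i h‖ ^ 2 ≤ 0 := by nlinarith
    have h3 : ‖p i h‖ = 0 := by nlinarith [norm_nonneg (p i h)]
    exact norm_eq_zero.mp h3
  · intro horth h
    set q : H →ₗ[ℂ] H := ∑ i, p i with hqdef
    have hq : q ∘ₗ q = q := by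
      rw [hqdef, ← Module.End.mul_eq_comp, Finset.sum_mul]
      refine Finset.sum_congr rfl fun i _ => ?_
      rw [Finset.mul_sum]
      rw [Finset.sum_eq_single i
        (fun j _ hne => by rw [Module.End.mul_eq_comp, horth i j hne.symm]) (by simp)]
      rw [Module.End.mul_eq_comp, hp i]
    have hqs : q.IsSymmetric := by
      rw [hqdef]
      exact Finset.sum_induction p LinearMap.IsSymmetric
        (fun a b ha hb => ha.add hb) LinearMap.IsSymmetric.zero fun i _ => hps i
    set r : H →ₗ[ℂ] H := LinearMap.id - q with hrdef
    have hr : r ∘ₗ r = r := by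
      rw [hrdef, LinearMap.sub_comp, LinearMap.comp_sub, LinearMap.comp_sub,
        LinearMap.id_comp, LinearMap.comp_id, hq]
      abel
    have hrs : r.IsSymmetric := LinearMap.IsSymmetric.sub LinearMap.IsSymmetric.id hqs
    have h1 : ⟪r h, h⟫_ℂ = ⟪r h, r h⟫_ℂ := by
      conv_lhs => rw [show r h = r (r h) from (LinearMap.congr_fun hr h).symm]
      exact hrs (r h) h
    rw [h1, show (⟪r h, r h⟫_ℂ).re = ‖r h‖ ^ 2 from inner_self_eq_norm_sq (𝕜 := ℂ) (r h)]
    positivity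
end

section
/- Let H be a finite-dimensional complex Hilbert space and let m be a positive semidefinite linear operator on H with tr(m) = 1 such that tr(m ∘ P_v) ∈ {0,1} for every one-dimensional subspace v of H, where P_v is the orthogonal projection onto v. Then m is the orthogonal projection onto a one-dimensional subspace (i.e., m has eigenvalue 1 with multiplicity 1 and eigenvalue 0 otherwise). -/
open scoped InnerProductSpace

lemma trace_eq_sum_inner_aux {H : Type*} [NormedAddCommGroup H] [InnerProductSpace ℂ H]
    [FiniteDimensional ℂ H] {ι : Type*} [Fintype ι] [DecidableEq ι]
    (b : OrthonormalBasis ι ℂ H) (f : H →ₗ[ℂ] H) :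
    LinearMap.trace ℂ H f = ∑ i, ⟪b i, f (b i)⟫_ℂ := by
  rw [LinearMap.trace_eq_matrix_trace ℂ b.toBasis, Matrix.trace]
  congr 1
  ext i
  rw [Matrix.diag_apply, LinearMap.toMatrix_apply, b.coe_toBasis_repr_apply,
    b.repr_apply_apply, b.coe_toBasis]

theorem stmt_14 (H : Type*) [NormedAddCommGroup H] [InnerProductSpace ℂ H]
    [FiniteDimensional ℂ H] (m : H →ₗ[ℂ] H)
    (hsym : m.IsSymmetric) (hpos : ∀ h : H, 0 ≤ (⟪m h, h⟫_ℂ).re)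
    (htr : LinearMap.trace ℂ H m = 1)
    (h01 : ∀ v : Submodule ℂ H, Module.finrank ℂ v = 1 →
      LinearMap.trace ℂ H
        (m ∘ₗ (v.subtype ∘ₗ (v.orthogonalProjection).toLinearMap)) ∈
          ({0, 1} : Set ℂ)) :
    ∃ v : Submodule ℂ H, Module.finrank ℂ v = 1 ∧
      m = v.subtype ∘ₗ (v.orthogonalProjection).toLinearMap := by
  classical
  have hn : Module.finrank ℂ H = Module.finrank ℂ H := rfl
  set b := hsym.eigenvectorBasis hn with hb
  set μ := hsym.eigenvalues hn with hμ
  have hmb : ∀ i, m (b i) = (μ i : ℂ) • b i := fun i => hsym.apply_eigenvectorBasis hn i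
  have hbne : ∀ i, b i ≠ 0 := fun i => by simpa using (b.toBasis.ne_zero i)
  have hnorm : ∀ i, ‖b i‖ = 1 := fun i => b.orthonormal.1 i
  have hself : ∀ i, ⟪b i, b i⟫_ℂ = 1 := by
    intro i
    rw [@inner_self_eq_norm_sq_to_K ℂ]
    simp [hnorm i]
  have hoff : ∀ i j, i ≠ j → ⟪b i, b j⟫_ℂ = 0 := fun i j h => b.orthonormal.2 h
  -- each eigenvalue is 0 or 1
  have hval : ∀ i, (μ i : ℂ) ∈ ({0, 1} : Set ℂ) := by
    intro i
    have hrank : Module.finrank ℂ (ℂ ∙ b i) = 1 := finrank_span_singleton (hbne i)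
    have hmem := h01 (ℂ ∙ b i) hrank
    have hproj : ∀ x : H, ((ℂ ∙ b i).subtype ∘ₗ
        ((ℂ ∙ b i).orthogonalProjection).toLinearMap) x
        = (⟪b i, x⟫_ℂ / ((‖b i‖ : ℂ) ^ 2)) • b i := by
      intro x
      simp [Submodule.starProjection_singleton]
    have htreq : LinearMap.trace ℂ H
        (m ∘ₗ ((ℂ ∙ b i).subtype ∘ₗ ((ℂ ∙ b i).orthogonalProjection).toLinearMap))
        = (μ i : ℂ) := by
      rw [trace_eq_sum_inner_aux b]
      have hterm : ∀ j, ⟪b j, (m ∘ₗ ((ℂ ∙ b i).subtype ∘ₗ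
          ((ℂ ∙ b i).orthogonalProjection).toLinearMap)) (b j)⟫_ℂ
          = if j = i then (μ i : ℂ) else 0 := by
        intro j
        rw [LinearMap.comp_apply, hproj (b j), map_smul, hmb i, inner_smul_right,
          inner_smul_right]
        by_cases h : j = i
        · subst h
          rw [hself j]
          simp [hnorm j]
        · rw [hoff j i h]
          simp [h]
      rw [Finset.sum_congr rfl fun j _ => hterm j]
      simp
    rwa [htreq] at hmem
  -- real version
  have hvalR : ∀ i, μ i = 0 ∨ μ i = 1 := by
    intro i
    have h := hval i
    simp only [Set.mem_insert_iff, Set.mem_singleton_iff] at h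
    rcases h with h | h
    · left; exact_mod_cast h
    · right; exact_mod_cast h
  -- sum of eigenvalues is 1
  have hsum : ∑ i, μ i = 1 := by
    have : LinearMap.trace ℂ H m = ∑ i, (μ i : ℂ) := by
      rw [trace_eq_sum_inner_aux b]
      congr 1
      ext i
      rw [hmb i, inner_smul_right, hself i, mul_one]
    rw [htr] at this
    exact_mod_cast this.symm
  -- exactly one eigenvalue equals 1
  set s : Finset (Fin (Module.finrank ℂ H)) := Finset.univ.filter (fun i => μ i = 1) with hs
  have hcard : s.card = 1 := by
    have key : ∑ i, μ i = (s.card : ℝ) := by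
      rw [← Finset.sum_filter_add_sum_filter_not Finset.univ (fun i => μ i = 1) μ]
      have h1 : ∑ i ∈ Finset.filter (fun i => μ i = 1) Finset.univ, μ i = (s.card : ℝ) := by
        rw [Finset.sum_congr rfl (fun i hi => (Finset.mem_filter.mp hi).2)]
        rw [Finset.sum_const, nsmul_eq_mul, mul_one]
      have h2 : ∑ i ∈ Finset.filter (fun i => ¬ μ i = 1) Finset.univ, μ i = 0 := by
        apply Finset.sum_eq_zero
        intro i hi
        rcases hvalR i with h | h
        · exact h
        · exact absurd h (Finset.mem_filter.mp hi).2
      rw [h1, h2, add_zero]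
    rw [key] at hsum
    exact_mod_cast hsum
  obtain ⟨i₀, hi₀⟩ := Finset.card_eq_one.mp hcard
  have hμi₀ : μ i₀ = 1 := by
    have : i₀ ∈ s := hi₀ ▸ Finset.mem_singleton_self i₀
    exact (Finset.mem_filter.mp this).2
  have hμj : ∀ j, j ≠ i₀ → μ j = 0 := by
    intro j hj
    rcases hvalR j with h | h
    · exact h
    · exfalso
      have : j ∈ s := Finset.mem_filter.mpr ⟨Finset.mem_univ j, h⟩
      rw [hi₀, Finset.mem_singleton] at this
      exact hj this
  refine ⟨ℂ ∙ b i₀, finrank_span_singleton (hbne i₀), ?_⟩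
  apply b.toBasis.ext
  intro j
  rw [b.coe_toBasis, hmb j]
  have hproj : ((ℂ ∙ b i₀).subtype ∘ₗ
      ((ℂ ∙ b i₀).orthogonalProjection).toLinearMap) (b j)
      = (⟪b i₀, b j⟫_ℂ / ((‖b i₀‖ : ℂ) ^ 2)) • b i₀ := by
    simp [Submodule.starProjection_singleton]
  rw [hproj]
  by_cases h : j = i₀
  · subst h
    rw [hself j, hμi₀]
    simp [hnorm j]
  · rw [hoff i₀ j (Ne.symm h), hμj j h]
    simp
end

section
/- There is no function μ from the set of linear subspaces of a complex Hilbert space H of dimension at least 3 to {0,1} such that μ(H) = 1 and for every finite collection of pairwise orthogonal subspaces v_1, …, v_ℓ, μ(v_1 + ⋯ + v_ℓ) = μ(v_1) + ⋯ + μ(v_ℓ), assuming Gleason's theorem: every finitely additive measure on subspaces of H has the form v ↦ tr(m ∘ P_v) for some positive semidefinite operator m. -/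
open scoped InnerProductSpace
open Module

section Helpers
variable {H : Type*} [NormedAddCommGroup H] [InnerProductSpace ℂ H] [FiniteDimensional ℂ H]

lemma trace_onb {n : ℕ} (b : OrthonormalBasis (Fin n) ℂ H) (T : H →ₗ[ℂ] H) :
    LinearMap.trace ℂ H T = ∑ i, ⟪b i, T (b i)⟫_ℂ := by
  rw [LinearMap.trace_eq_matrix_trace ℂ b.toBasis T, Matrix.trace]
  simp [Matrix.diag, LinearMap.toMatrix_apply, b.coe_toBasis_repr_apply,
    OrthonormalBasis.repr_apply_apply]

lemma trace_rank_one (m : H →ₗ[ℂ] H) (x : H) (hx : ‖x‖ = 1) :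
    LinearMap.trace ℂ H
      (m ∘ₗ ((ℂ ∙ x).subtype ∘ₗ ((ℂ ∙ x).orthogonalProjectionOnto).toLinearMap))
      = ⟪x, m x⟫_ℂ := by
  let b := stdOrthonormalBasis ℂ H
  rw [trace_onb b]
  have key : ∀ y : H, m ((((ℂ ∙ x).orthogonalProjectionOnto) y : H)) = ⟪x, y⟫_ℂ • m x := by
    intro y
    rw [← Submodule.starProjection_apply, Submodule.starProjection_singleton, hx]
    simp
  simp only [LinearMap.comp_apply, ContinuousLinearMap.coe_coe, Submodule.coe_subtype, key]
  rw [← b.sum_inner_mul_inner x (m x)]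
  congr 1; ext i
  rw [inner_smul_right]

end Helpers

theorem stmt_15 (H : Type*) [NormedAddCommGroup H] [InnerProductSpace ℂ H]
    [FiniteDimensional ℂ H] (hdim : 3 ≤ Module.finrank ℂ H)
    (gleason : ∀ μ : Submodule ℂ H → ℝ, (∀ v, 0 ≤ μ v) →
      (∀ (ℓ : ℕ) (v : Fin ℓ → Submodule ℂ H),
        (∀ i j, i ≠ j → ∀ x ∈ v i, ∀ y ∈ v j, ⟪x, y⟫_ℂ = 0) →
        μ (⨆ i, v i) = ∑ i, μ (v i)) →
      ∃ m : H →ₗ[ℂ] H, m.IsSymmetric ∧ (∀ h : H, 0 ≤ (⟪m h, h⟫_ℂ).re) ∧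
        ∀ v : Submodule ℂ H,
          μ v = (LinearMap.trace ℂ H
            (m ∘ₗ (v.subtype ∘ₗ (v.orthogonalProjectionOnto).toLinearMap))).re) :
    ¬ ∃ μ : Submodule ℂ H → ℝ,
      (∀ v, μ v = 0 ∨ μ v = 1) ∧ μ ⊤ = 1 ∧
      (∀ (ℓ : ℕ) (v : Fin ℓ → Submodule ℂ H),
        (∀ i j, i ≠ j → ∀ x ∈ v i, ∀ y ∈ v j, ⟪x, y⟫_ℂ = 0) →
        μ (⨆ i, v i) = ∑ i, μ (v i)) := by
  rintro ⟨μ, h01, htop, hadd⟩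
  have hpos : ∀ v, 0 ≤ μ v := by
    intro v; rcases h01 v with h | h <;> rw [h] <;> norm_num
  obtain ⟨m, _hsym, _hm, htr⟩ := gleason μ hpos hadd
  set f : H → ℝ := fun x => (⟪x, m x⟫_ℂ).re with hf_def
  have hf : ∀ x : H, ‖x‖ = 1 → μ (ℂ ∙ x) = f x := by
    intro x hx
    rw [htr, trace_rank_one m x hx]
  have hfc : Continuous f :=
    Complex.continuous_re.comp (continuous_id.inner m.continuous_of_finiteDimensional)
  -- sphere is connected
  have hrank : 1 < Module.rank ℝ H := by
    have h2 : 2 * Module.rank ℂ H = Module.rank ℝ H := (rank_real_of_complex H).symm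
    have h3 : (3 : Cardinal) ≤ Module.rank ℂ H := by
      have := hdim
      rw [← finrank_eq_rank ℂ H]
      exact_mod_cast this
    have : (1 : Cardinal) < Module.rank ℂ H := lt_of_lt_of_le (by norm_num) h3
    calc (1 : Cardinal) < Module.rank ℂ H := this
      _ ≤ 2 * Module.rank ℂ H := le_mul_of_one_le_left zero_le (by norm_num)
      _ = Module.rank ℝ H := h2
  have hcon : IsPreconnected (Metric.sphere (0 : H) 1) :=
    (isConnected_sphere hrank (0 : H) zero_le_one).isPreconnected
  -- f is constant on unit vectors
  have hconst : ∀ x y : H, ‖x‖ = 1 → ‖y‖ = 1 → f x = f y := by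
    intro x y hx hy
    by_contra hne
    have hmemx : x ∈ Metric.sphere (0 : H) 1 := by simpa using hx
    have hmemy : y ∈ Metric.sphere (0 : H) 1 := by simpa using hy
    have h01' : ∀ z : H, ‖z‖ = 1 → f z = 0 ∨ f z = 1 := by
      intro z hz; rw [← hf z hz]; exact h01 _
    rcases h01' x hx with hx0 | hx1 <;> rcases h01' y hy with hy0 | hy1
    · exact hne (by rw [hx0, hy0])
    · have := hcon.intermediate_value hmemx hmemy hfc.continuousOn
      have hmid : (1/2 : ℝ) ∈ Set.Icc (f x) (f y) := by
        rw [hx0, hy1]; norm_num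
      obtain ⟨z, hz, hfz⟩ := this hmid
      rcases h01' z (by simpa using hz) with h | h <;> rw [hfz] at h <;> norm_num at h
    · have := hcon.intermediate_value hmemy hmemx hfc.continuousOn
      have hmid : (1/2 : ℝ) ∈ Set.Icc (f y) (f x) := by
        rw [hy0, hx1]; norm_num
      obtain ⟨z, hz, hfz⟩ := this hmid
      rcases h01' z (by simpa using hz) with h | h <;> rw [hfz] at h <;> norm_num at h
    · exact hne (by rw [hx1, hy1])
  -- orthonormal basis
  set n := Module.finrank ℂ H with hn
  let b := stdOrthonormalBasis ℂ H
  have hb1 : ∀ i, ‖b i‖ = 1 := b.orthonormal.1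
  have hnpos : 0 < n := by omega
  set v : Fin n → Submodule ℂ H := fun i => ℂ ∙ b i with hv
  have horth : ∀ i j, i ≠ j → ∀ x ∈ v i, ∀ y ∈ v j, ⟪x, y⟫_ℂ = 0 := by
    intro i j hij x hx y hy
    obtain ⟨a, rfl⟩ := Submodule.mem_span_singleton.1 hx
    obtain ⟨c, rfl⟩ := Submodule.mem_span_singleton.1 hy
    rw [inner_smul_left, inner_smul_right, b.orthonormal.2 hij]
    ring
  have hsup : (⨆ i, v i) = ⊤ := by
    rw [hv, ← Submodule.span_range_eq_iSup]
    have := b.toBasis.span_eq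
    rwa [b.coe_toBasis] at this
  have hsum := hadd n v horth
  rw [hsup, htop] at hsum
  have hall : ∀ i, μ (v i) = μ (v ⟨0, hnpos⟩) := by
    intro i
    rw [hv]
    simp only
    rw [hf _ (hb1 i), hf _ (hb1 ⟨0, hnpos⟩)]
    exact hconst _ _ (hb1 i) (hb1 ⟨0, hnpos⟩)
  rw [Finset.sum_congr rfl (fun i _ => hall i), Finset.sum_const, Finset.card_univ,
    Fintype.card_fin, nsmul_eq_mul] at hsum
  rcases h01 (v ⟨0, hnpos⟩) with h | h <;> rw [h] at hsum
  · norm_num at hsum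
  · rw [mul_one] at hsum
    have : (n : ℝ) ≥ 3 := by exact_mod_cast hdim
    linarith
end
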